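/- Let X ⊆ ℝ^d be r-regular. Then every principal curvature of ∂X (an eigenvalue of the differential of the outward normal field, wherever it exists) has absolute value at most 1/r. -/

import Mathlib

open scoped RealInnerProductSpace

set_option maxHeartbeats 2000000

/-- For an `r`-regular set `X` with outward normal field `ν`, every principal curvature
of `∂X` (an eigenvalue of the differential of `ν` restricted to the tangent space, where
it exists) has absolute value at most `1/r`. -/
theorem rRegular_principal_curvature_bound (d : ℕ) (r : ℝ) (hr : 0 < r)
    (X : Set (EuclideanSpace ℝ (Fin d))) (hX : IsClosed X)
    (ν : EuclideanSpace ℝ (Fin d) → EuclideanSpace ℝ (Fin d))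
    (hν : ∀ y ∈ frontier X, ‖ν y‖ = 1 ∧
      Metric.closedBall (y - r • ν y) r ⊆ X ∧
      interior (Metric.closedBall (y + r • ν y) r) ⊆ Xᶜ)
    (x : EuclideanSpace ℝ (Fin d)) (hx : x ∈ frontier X)
    (dn : EuclideanSpace ℝ (Fin d) →L[ℝ] EuclideanSpace ℝ (Fin d))
    (hdn : HasFDerivWithinAt ν dn (frontier X) x)
    (v : EuclideanSpace ℝ (Fin d)) (hv : v ≠ 0) (hvt : ⟪v, ν x⟫ = 0)
    (k : ℝ) (hk : dn v = k • v) :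
    |k| ≤ 1 / r := by
  have hfrX : frontier X ⊆ X := hX.frontier_subset
  obtain ⟨hν1, hin, hout⟩ := hν x hx
  set ν₀ := ν x with hν₀def
  set u : EuclideanSpace ℝ (Fin d) := ‖v‖⁻¹ • v with hudef
  have hvnorm : ‖v‖ ≠ 0 := norm_ne_zero_iff.mpr hv
  have hu1 : ‖u‖ = 1 := by
    rw [hudef, norm_smul, norm_inv, norm_norm, inv_mul_cancel₀ hvnorm]
  have huν : ⟪u, ν₀⟫ = 0 := by
    rw [hudef, real_inner_smul_left, hvt, mul_zero]
  have hdnu : dn u = k • u := by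
    rw [hudef, map_smul, hk, smul_comm]
  -- the two tangent-ball inequalities at any pair of frontier points
  have key : ∀ p ∈ frontier X, ∀ q ∈ frontier X,
      r ≤ ‖q - (p + r • ν p)‖ ∧ r ≤ ‖q - (p - r • ν p)‖ := by
    intro p hp q hq
    obtain ⟨h1, h2, h3⟩ := hν p hp
    constructor
    · by_contra h
      push_neg at h
      have hq' : q ∈ Metric.ball (p + r • ν p) r := by
        rw [Metric.mem_ball, dist_eq_norm]; exact h
      have := h3 (Metric.ball_subset_interior_closedBall hq')
      exact this (hfrX hq)
    · by_contra h
      push_neg at h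
      have hq' : q ∈ Metric.ball (p - r • ν p) r := by
        rw [Metric.mem_ball, dist_eq_norm]; exact h
      have hball : Metric.ball (p - r • ν p) r ⊆ interior X :=
        interior_maximal (Metric.ball_subset_closedBall.trans h2) Metric.isOpen_ball
      exact hq.2 (hball hq')
  have key2 : ∀ p ∈ frontier X, ∀ q ∈ frontier X,
      |⟪q - p, ν p⟫| * (2 * r) ≤ ‖q - p‖ ^ 2 := by
    intro p hp q hq
    obtain ⟨h1, -, -⟩ := hν p hp
    obtain ⟨ho, hi⟩ := key p hp q hq
    have hno : ‖q - (p + r • ν p)‖ = ‖(q - p) - r • ν p‖ := by rw [sub_add_eq_sub_sub]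
    have hni : ‖q - (p - r • ν p)‖ = ‖(q - p) + r • ν p‖ := by rw [sub_sub_eq_add_sub, sub_add_eq_add_sub]
    have hsm : ‖r • ν p‖ ^ 2 = r ^ 2 := by
      rw [norm_smul, h1, mul_one, Real.norm_eq_abs, sq_abs]
    have e1 : r ^ 2 ≤ ‖(q - p) - r • ν p‖ ^ 2 := by
      rw [← hno]; nlinarith [norm_nonneg (q - (p + r • ν p))]
    have e2 : r ^ 2 ≤ ‖(q - p) + r • ν p‖ ^ 2 := by
      rw [← hni]; nlinarith [norm_nonneg (q - (p - r • ν p))]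
    rw [norm_sub_sq_real, real_inner_smul_right, hsm] at e1
    rw [norm_add_sq_real, real_inner_smul_right, hsm] at e2
    rw [← abs_of_pos (show (0:ℝ) < 2 * r by linarith), ← abs_mul]
    exact abs_le.mpr ⟨by nlinarith, by nlinarith⟩
  -- norm expansion in the orthonormal pair (u, ν₀)
  have hexp : ∀ a b : ℝ, ‖a • u + b • ν₀‖ ^ 2 = a ^ 2 + b ^ 2 := by
    intro a b
    have h1 : ‖a • u‖ = |a| := by rw [norm_smul, hu1, mul_one, Real.norm_eq_abs]
    have h2 : ‖b • ν₀‖ = |b| := by rw [norm_smul, hν1, mul_one, Real.norm_eq_abs]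
    have h3 : ⟪a • u, b • ν₀⟫ = 0 := by
      rw [real_inner_smul_left, real_inner_smul_right, huν]; ring
    rw [norm_add_sq_real, h1, h2, h3, sq_abs, sq_abs]; ring
  have haux : ∀ ε : ℝ, 0 < ε → |k| ≤ 1 / r + ε := by
    intro ε hε
    -- get δ from the derivative
    have hev : ∀ᶠ y in nhdsWithin x (frontier X), ‖ν y - ν x - dn (y - x)‖ ≤ ε * ‖y - x‖ :=
      hdn.isLittleO.def hε
    rw [Filter.eventually_iff, Metric.mem_nhdsWithin_iff] at hev
    obtain ⟨δ, hδpos, hδ⟩ := hev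
    set C := ‖dn ν₀‖ with hC
    have hC0 : 0 ≤ C := norm_nonneg _
    set m := min r (δ / 2) with hm
    have hm0 : 0 < m := lt_min hr (by linarith)
    have main : ∀ t ∈ Set.Ioo (0 : ℝ) m,
        |k| ≤ 1 / r + t ^ 2 / r ^ 3 + t * C / r + t ^ 2 * C / r ^ 2 + ε * (1 + t ^ 2 / r ^ 2) := by
      intro t ht
      obtain ⟨ht0, htm⟩ := ht
      have htr : t < r := lt_of_lt_of_le htm (min_le_left _ _)
      have htδ : t < δ / 2 := lt_of_lt_of_le htm (min_le_right _ _)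
      set w := Real.sqrt (r ^ 2 - t ^ 2) with hw
      have hw2 : w ^ 2 = r ^ 2 - t ^ 2 := Real.sq_sqrt (by nlinarith)
      have hw0 : 0 ≤ w := Real.sqrt_nonneg _
      have hwr : w ≤ r := by nlinarith
      have hwpos : 0 < w := by nlinarith
      set g := r - w with hg
      have hg0 : 0 ≤ g := by simp [hg]; linarith
      have hgt : g ≤ t ^ 2 / r := by
        rw [hg, le_div_iff₀ hr]
        nlinarith [mul_le_mul_of_nonneg_left hwr hw0]
      -- the segment crossing the frontier
      set f : ℝ → EuclideanSpace ℝ (Fin d) := fun s => x + t • u + s • ν₀ with hf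
      have hfc : Continuous f := by
        apply Continuous.add continuous_const
        exact continuous_id.smul continuous_const
      have hfa : f (-g) ∈ X := by
        apply hin
        rw [Metric.mem_closedBall, dist_eq_norm]
        have : f (-g) - (x - r • ν₀) = t • u + (r - g) • ν₀ := by
          simp only [hf]; module
        rw [this]
        have h2 : ‖t • u + (r - g) • ν₀‖ ^ 2 = t ^ 2 + (r - g) ^ 2 := hexp _ _
        have : t ^ 2 + (r - g) ^ 2 = r ^ 2 := by rw [hg]; nlinarith
        nlinarith [norm_nonneg (t • u + (r - g) • ν₀)]
      have hfb : f r ∉ X := by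
        have : f r ∈ interior (Metric.closedBall (x + r • ν₀) r) := by
          apply Metric.ball_subset_interior_closedBall
          rw [Metric.mem_ball, dist_eq_norm]
          have : f r - (x + r • ν₀) = t • u := by simp only [hf]; module
          rw [this, norm_smul, hu1, mul_one, Real.norm_eq_abs, abs_of_pos ht0]
          exact htr
        exact hout this
      -- the supremum of the part of the segment inside X lies on the frontier
      set S : Set ℝ := Set.Icc (-g) r ∩ f ⁻¹' X with hS
      have hSc : IsClosed S := isClosed_Icc.inter (hX.preimage hfc)
      have hSne : S.Nonempty := ⟨-g, ⟨le_refl _, by linarith⟩, hfa⟩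
      have hSbdd : BddAbove S := ⟨r, fun s hs => hs.1.2⟩
      set s₀ := sSup S with hs₀
      have hs₀S : s₀ ∈ S := hSc.csSup_mem hSne hSbdd
      have hs₀X : f s₀ ∈ X := hs₀S.2
      have hs₀r : s₀ < r := lt_of_le_of_ne hs₀S.1.2 (fun h => hfb (h ▸ hs₀X))
      have hs₀g : -g ≤ s₀ := hs₀S.1.1
      have hy : f s₀ ∈ frontier X := by
        rw [frontier, Set.mem_diff]
        refine ⟨subset_closure hs₀X, ?_⟩
        intro hint
        have hpre : f ⁻¹' interior X ∈ nhds s₀ :=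
          (isOpen_interior.preimage hfc).mem_nhds hint
        obtain ⟨η, hη, hball⟩ := Metric.mem_nhds_iff.mp hpre
        set s₁ := min (s₀ + η / 2) ((s₀ + r) / 2) with hs₁
        have hs₁gt : s₀ < s₁ := lt_min (by linarith) (by linarith)
        have hs₁le : s₁ ≤ r := le_trans (min_le_right _ _) (by linarith)
        have hs₁ball : s₁ ∈ Metric.ball s₀ η := by
          rw [Metric.mem_ball, Real.dist_eq, abs_of_pos (by linarith)]
          calc s₁ - s₀ ≤ (s₀ + η / 2) - s₀ := by
                have := min_le_left (s₀ + η / 2) ((s₀ + r) / 2); linarith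
            _ < η := by linarith
        have hs₁S : s₁ ∈ S := ⟨⟨by linarith, hs₁le⟩, Set.mem_preimage.mpr (interior_subset (Set.mem_preimage.mp (hball hs₁ball)))⟩
        exact absurd (le_csSup hSbdd hs₁S) (not_le.mpr hs₁gt)
      set y := f s₀ with hy'
      -- bound |s₀| ≤ g ≤ t²/r
      have houter := (key x hx y hy).1
      have hyx : y - x = t • u + s₀ • ν₀ := by simp only [hy', hf]; module
      have hyo : y - (x + r • ν₀) = t • u + (s₀ - r) • ν₀ := by simp only [hy', hf]; module
      have houter2 : r ^ 2 ≤ t ^ 2 + (s₀ - r) ^ 2 := by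
        have := hexp t (s₀ - r)
        rw [hyo] at houter
        nlinarith
      have hs₀le : s₀ ≤ g := by nlinarith
      have hs₀abs : |s₀| ≤ t ^ 2 / r := by
        rw [abs_le]
        constructor
        · linarith
        · linarith
      have hs2 : s₀ ^ 2 ≤ t ^ 4 / r ^ 2 := by
        have h1 : |s₀| ^ 2 ≤ (t ^ 2 / r) ^ 2 := by
          apply pow_le_pow_left₀ (abs_nonneg _) hs₀abs
        rw [sq_abs] at h1
        calc s₀ ^ 2 ≤ (t ^ 2 / r) ^ 2 := h1
          _ = t ^ 4 / r ^ 2 := by ring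
      -- norm of y - x
      have hyx2 : ‖y - x‖ ^ 2 = t ^ 2 + s₀ ^ 2 := by rw [hyx]; exact hexp _ _
      have hyxle : ‖y - x‖ < δ := by
        have h1 : s₀ ^ 2 ≤ t ^ 2 := by nlinarith
        have h2 : ‖y - x‖ ^ 2 ≤ 2 * t ^ 2 := by rw [hyx2]; linarith
        nlinarith [norm_nonneg (y - x)]
      -- derivative estimate
      have hyball : y ∈ Metric.ball x δ ∩ frontier X := by
        refine ⟨?_, hy⟩
        rw [Metric.mem_ball, dist_eq_norm]
        exact hyxle
      have he : ‖ν y - ν x - dn (y - x)‖ ≤ ε * ‖y - x‖ := hδ hyball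
      set e := ν y - ν x - dn (y - x) with hedef
      have hνy : ν y - ν₀ = dn (y - x) + e := by rw [hedef, hν₀def]; abel
      -- expand the inner product
      have hdnyx : dn (y - x) = (t * k) • u + s₀ • dn ν₀ := by
        rw [hyx, map_add]
        simp only [map_smul, hdnu, smul_smul]
      set A := ⟪u, dn ν₀⟫ with hA
      set B := ⟪ν₀, dn ν₀⟫ with hB
      have hAC : |A| ≤ C := by
        calc |A| ≤ ‖u‖ * ‖dn ν₀‖ := abs_real_inner_le_norm _ _
          _ = C := by rw [hu1, one_mul]
      have hBC : |B| ≤ C := by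
        calc |B| ≤ ‖ν₀‖ * ‖dn ν₀‖ := abs_real_inner_le_norm _ _
          _ = C := by rw [hν1, one_mul]
      have h1 : ⟪u, u⟫ = (1:ℝ) := by
        rw [real_inner_self_eq_norm_sq, hu1]; norm_num
      have h2 : ⟪ν₀, u⟫ = (0:ℝ) := by rw [real_inner_comm]; exact huν
      have hip : ⟪y - x, ν y - ν₀⟫ =
          t ^ 2 * k + t * s₀ * A + s₀ ^ 2 * B + ⟪y - x, e⟫ := by
        rw [hνy, hdnyx, hyx]
        simp only [inner_add_left, inner_add_right, real_inner_smul_left, real_inner_smul_right,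
          h1, h2, huν, ← hA, ← hB]
        ring
      -- the two-sided curvature bound on the inner product
      have hipbd : |⟪y - x, ν y - ν₀⟫| ≤ ‖y - x‖ ^ 2 / r := by
        have k1 := key2 x hx y hy
        have k2 := key2 y hy x hx
        have hsplit : ⟪y - x, ν y - ν₀⟫ = -⟪x - y, ν y⟫ - ⟪y - x, ν₀⟫ := by
          rw [inner_sub_right]
          have : ⟪y - x, ν y⟫ = -⟪x - y, ν y⟫ := by
            rw [← inner_neg_left, neg_sub]
          rw [this]
        rw [norm_sub_rev x y] at k2
        have habs : |⟪y - x, ν y - ν₀⟫| ≤ |⟪x - y, ν y⟫| + |⟪y - x, ν₀⟫| := by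
          rw [hsplit]
          exact (abs_sub _ _).trans (by rw [abs_neg])
        rw [le_div_iff₀ hr]
        have hmul := mul_le_mul_of_nonneg_right habs hr.le
        linarith
      have hie : |⟪y - x, e⟫| ≤ ε * ‖y - x‖ ^ 2 := by
        calc |⟪y - x, e⟫| ≤ ‖y - x‖ * ‖e‖ := abs_real_inner_le_norm _ _
          _ ≤ ‖y - x‖ * (ε * ‖y - x‖) := by
              apply mul_le_mul_of_nonneg_left he (norm_nonneg _)
          _ = ε * ‖y - x‖ ^ 2 := by ring
      -- combine
      have hk2 : t ^ 2 * |k| ≤ ‖y - x‖ ^ 2 / r + t * |s₀| * C + s₀ ^ 2 * C + ε * ‖y - x‖ ^ 2 := by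
        have h1 : t ^ 2 * k = ⟪y - x, ν y - ν₀⟫ - t * s₀ * A - s₀ ^ 2 * B - ⟪y - x, e⟫ := by
          rw [hip]; ring
        have h2 : |t ^ 2 * k| ≤ |⟪y - x, ν y - ν₀⟫| + |t * s₀ * A| + |s₀ ^ 2 * B| + |⟪y - x, e⟫| := by
          rw [h1]
          calc |⟪y - x, ν y - ν₀⟫ - t * s₀ * A - s₀ ^ 2 * B - ⟪y - x, e⟫|
              ≤ |⟪y - x, ν y - ν₀⟫ - t * s₀ * A - s₀ ^ 2 * B| + |⟪y - x, e⟫| := abs_sub _ _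
            _ ≤ |⟪y - x, ν y - ν₀⟫ - t * s₀ * A| + |s₀ ^ 2 * B| + |⟪y - x, e⟫| := by
                have := abs_sub (⟪y - x, ν y - ν₀⟫ - t * s₀ * A) (s₀ ^ 2 * B)
                linarith
            _ ≤ |⟪y - x, ν y - ν₀⟫| + |t * s₀ * A| + |s₀ ^ 2 * B| + |⟪y - x, e⟫| := by
                have := abs_sub (⟪y - x, ν y - ν₀⟫) (t * s₀ * A)
                linarith
        have h3 : |t ^ 2 * k| = t ^ 2 * |k| := by
          rw [abs_mul, abs_of_pos (by positivity : (0:ℝ) < t ^ 2)]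
        have h4 : |t * s₀ * A| ≤ t * |s₀| * C := by
          rw [abs_mul, abs_mul, abs_of_pos ht0]
          apply mul_le_mul_of_nonneg_left hAC
          positivity
        have h5 : |s₀ ^ 2 * B| ≤ s₀ ^ 2 * C := by
          rw [abs_mul, abs_of_nonneg (sq_nonneg s₀)]
          apply mul_le_mul_of_nonneg_left hBC (sq_nonneg _)
        rw [h3] at h2
        linarith
      -- final arithmetic
      have hbound : t ^ 2 * |k| ≤ t ^ 2 * (1 / r + t ^ 2 / r ^ 3 + t * C / r + t ^ 2 * C / r ^ 2
          + ε * (1 + t ^ 2 / r ^ 2)) := by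
        have hn1 : ‖y - x‖ ^ 2 ≤ t ^ 2 + t ^ 4 / r ^ 2 := by rw [hyx2]; linarith
        have hn2 : ‖y - x‖ ^ 2 / r ≤ (t ^ 2 + t ^ 4 / r ^ 2) / r := by
          apply div_le_div_of_nonneg_right hn1 hr.le
        have hn3 : t * |s₀| * C ≤ t * (t ^ 2 / r) * C := by
          apply mul_le_mul_of_nonneg_right _ hC0
          apply mul_le_mul_of_nonneg_left hs₀abs (le_of_lt ht0)
        have hn4 : s₀ ^ 2 * C ≤ (t ^ 4 / r ^ 2) * C := mul_le_mul_of_nonneg_right hs2 hC0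
        have hn5 : ε * ‖y - x‖ ^ 2 ≤ ε * (t ^ 2 + t ^ 4 / r ^ 2) :=
          mul_le_mul_of_nonneg_left hn1 (le_of_lt hε)
        have heq : (t ^ 2 + t ^ 4 / r ^ 2) / r + t * (t ^ 2 / r) * C + (t ^ 4 / r ^ 2) * C
            + ε * (t ^ 2 + t ^ 4 / r ^ 2) = t ^ 2 * (1 / r + t ^ 2 / r ^ 3 + t * C / r
            + t ^ 2 * C / r ^ 2 + ε * (1 + t ^ 2 / r ^ 2)) := by
          field_simp
        linarith
      have ht2 : (0:ℝ) < t ^ 2 := by positivity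
      exact le_of_mul_le_mul_left (by linarith [hbound]) ht2
    -- take the limit t → 0⁺
    set F : ℝ → ℝ := fun t => 1 / r + t ^ 2 / r ^ 3 + t * C / r + t ^ 2 * C / r ^ 2
      + ε * (1 + t ^ 2 / r ^ 2) with hF
    have hFc : Continuous F := by
      apply Continuous.add
      apply Continuous.add
      apply Continuous.add
      apply Continuous.add
      · exact continuous_const
      · exact (continuous_pow 2).div_const _
      · exact ((continuous_id.mul continuous_const).div_const _)
      · exact (((continuous_pow 2).mul continuous_const).div_const _)
      · exact continuous_const.mul (continuous_const.add ((continuous_pow 2).div_const _))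
    have hlim : Filter.Tendsto F (nhdsWithin 0 (Set.Ioi 0)) (nhds (F 0)) :=
      (hFc.tendsto 0).mono_left nhdsWithin_le_nhds
    have hF0 : F 0 = 1 / r + ε := by simp [hF]
    have hev2 : ∀ᶠ t in nhdsWithin (0:ℝ) (Set.Ioi 0), |k| ≤ F t := by
      filter_upwards [Ioo_mem_nhdsGT_of_mem (Set.mem_Ico.mpr ⟨le_refl 0, hm0⟩)] with t ht
      exact main t ht
    have := ge_of_tendsto hlim hev2
    rw [hF0] at this
    linarith
  by_contra h
  push_neg at h
  have := haux ((|k| - 1 / r) / 2) (by linarith)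
  linarith
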